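/- Let μ be a locally finite nonnegative Borel measure on ℝ^n whose restriction to the ball B(0,1) is denoted μ̃. Then for every α > 0, the difference Wμ(x,t) − Wμ̃(x,t) of their Gauss–Weierstrass integrals tends to 0 as (x,t) → (0,0) within the parabolic region {(x,t) : ‖x‖² < α t}, provided Wμ(0,t₀) < ∞ for some t₀ > 0. In particular, Wμ has parabolic limit L at 0 if and only if Wμ̃ does. -/

import Mathlib

open MeasureTheory Filter

/-- The Gauss–Weierstrass (heat) kernel on ℝⁿ. -/
noncomputable def W (n : ℕ) (x : EuclideanSpace ℝ (Fin n)) (t : ℝ) : ℝ :=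
  (4 * Real.pi * t) ^ (-(n : ℝ) / 2) * Real.exp (-‖x‖ ^ 2 / (4 * t))

/-- The Gauss–Weierstrass integral of a measure, as a real number. -/
noncomputable def heatExt {n : ℕ} (μ : Measure (EuclideanSpace ℝ (Fin n)))
    (x : EuclideanSpace ℝ (Fin n)) (t : ℝ) : ℝ :=
  (∫⁻ ξ, ENNReal.ofReal (W n (x - ξ) t) ∂μ).toReal

/-- Pointwise bound: for small `t` and `‖x‖ ≤ 1/2`, on `‖ξ‖ ≥ 1` the heat kernel at `(x,t)`
is dominated by a small multiple of the heat kernel at `(0, t₀)`. -/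
lemma aux_key (n : ℕ) {t₀ t : ℝ} (ht₀ : 0 < t₀) (ht : 0 < t) (ht8 : t ≤ t₀ / 8)
    {x ξ : EuclideanSpace ℝ (Fin n)} (hx : ‖x‖ ≤ 1 / 2) (hξ : 1 ≤ ‖ξ‖) :
    W n (x - ξ) t ≤
      ((4 * Real.pi * t) ^ (-(n : ℝ) / 2) * Real.exp (-1 / (32 * t)) *
        (4 * Real.pi * t₀) ^ ((n : ℝ) / 2)) * W n (0 - ξ) t₀ := by
  have hπ := Real.pi_pos
  have h4t : (0 : ℝ) < 4 * Real.pi * t := by positivity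
  have h4t₀ : (0 : ℝ) < 4 * Real.pi * t₀ := by positivity
  have hB : (4 * Real.pi * t₀) ^ ((n : ℝ) / 2) * (4 * Real.pi * t₀) ^ (-(n : ℝ) / 2) = 1 := by
    rw [← Real.rpow_add h4t₀]
    rw [show (n : ℝ) / 2 + -(n : ℝ) / 2 = 0 by ring, Real.rpow_zero]
  have hs : ‖ξ‖ - ‖x‖ ≤ ‖x - ξ‖ := by
    rw [norm_sub_rev]; exact norm_sub_norm_le ξ x
  have hs2 : ‖ξ‖ ^ 2 / 4 ≤ ‖x - ξ‖ ^ 2 := by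
    nlinarith [norm_nonneg (x - ξ), norm_nonneg x]
  have hexp : Real.exp (-‖x - ξ‖ ^ 2 / (4 * t)) ≤
      Real.exp (-1 / (32 * t)) * Real.exp (-‖ξ‖ ^ 2 / (4 * t₀)) := by
    rw [← Real.exp_add]
    apply Real.exp_le_exp.mpr
    have hr2 : (1 : ℝ) ≤ ‖ξ‖ ^ 2 := by nlinarith
    have h1 : (1 : ℝ) / (32 * t) ≤ ‖ξ‖ ^ 2 / (32 * t) := by
      rw [div_le_div_iff₀ (by positivity) (by positivity)]
      nlinarith [mul_le_mul_of_nonneg_right hr2 (by positivity : (0:ℝ) ≤ 32 * t)]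
    have h2 : ‖ξ‖ ^ 2 / (4 * t₀) ≤ ‖ξ‖ ^ 2 / (32 * t) := by
      rw [div_le_div_iff₀ (by positivity) (by positivity)]
      nlinarith [mul_le_mul_of_nonneg_left (by linarith : 32 * t ≤ 4 * t₀) (by positivity : (0:ℝ) ≤ ‖ξ‖ ^ 2)]
    have h3 : ‖ξ‖ ^ 2 / (16 * t) ≤ ‖x - ξ‖ ^ 2 / (4 * t) := by
      rw [div_le_div_iff₀ (by positivity) (by positivity)]
      nlinarith
    have h4 : ‖ξ‖ ^ 2 / (16 * t) = ‖ξ‖ ^ 2 / (32 * t) + ‖ξ‖ ^ 2 / (32 * t) := by ring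
    have h5 : (1 : ℝ) / (32 * t) + ‖ξ‖ ^ 2 / (4 * t₀) ≤ ‖x - ξ‖ ^ 2 / (4 * t) := by linarith
    rw [neg_div, neg_div, neg_div]
    linarith
  have hA : (0 : ℝ) ≤ (4 * Real.pi * t) ^ (-(n : ℝ) / 2) := Real.rpow_nonneg h4t.le _
  unfold W
  rw [zero_sub, norm_neg]
  calc (4 * Real.pi * t) ^ (-(n : ℝ) / 2) * Real.exp (-‖x - ξ‖ ^ 2 / (4 * t))
      ≤ (4 * Real.pi * t) ^ (-(n : ℝ) / 2) *
        (Real.exp (-1 / (32 * t)) * Real.exp (-‖ξ‖ ^ 2 / (4 * t₀))) :=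
        mul_le_mul_of_nonneg_left hexp hA
    _ = ((4 * Real.pi * t) ^ (-(n : ℝ) / 2) * Real.exp (-1 / (32 * t)) *
          (4 * Real.pi * t₀) ^ ((n : ℝ) / 2)) *
        ((4 * Real.pi * t₀) ^ (-(n : ℝ) / 2) * Real.exp (-‖ξ‖ ^ 2 / (4 * t₀))) := by
        rw [show ((4 * Real.pi * t) ^ (-(n : ℝ) / 2) * Real.exp (-1 / (32 * t)) *
          (4 * Real.pi * t₀) ^ ((n : ℝ) / 2)) *
        ((4 * Real.pi * t₀) ^ (-(n : ℝ) / 2) * Real.exp (-‖ξ‖ ^ 2 / (4 * t₀)))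
          = ((4 * Real.pi * t₀) ^ ((n : ℝ) / 2) * (4 * Real.pi * t₀) ^ (-(n : ℝ) / 2)) *
            ((4 * Real.pi * t) ^ (-(n : ℝ) / 2) *
              (Real.exp (-1 / (32 * t)) * Real.exp (-‖ξ‖ ^ 2 / (4 * t₀)))) by ring, hB, one_mul]

/-- The constant in the tail bound tends to `0` as `t → 0⁺`. -/
lemma aux_c_tendsto (n : ℕ) (K : ℝ) :
    Tendsto (fun t : ℝ => (4 * Real.pi * t) ^ (-(n : ℝ) / 2) * Real.exp (-1 / (32 * t)) * K)
      (nhdsWithin 0 (Set.Ioi 0)) (nhds 0) := by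
  have hπ := Real.pi_pos
  have h := (tendsto_rpow_mul_exp_neg_mul_atTop_nhds_zero ((n : ℝ) / 2) (1 / 32)
    (by norm_num)).comp tendsto_inv_nhdsGT_zero
  have h2 := h.const_mul ((4 * Real.pi) ^ (-(n : ℝ) / 2) * K)
  rw [mul_zero] at h2
  refine h2.congr' ?_
  filter_upwards [self_mem_nhdsWithin] with t ht
  have ht' : (0 : ℝ) < t := ht
  have e1 : (4 * Real.pi * t) ^ (-(n : ℝ) / 2) =
      (4 * Real.pi) ^ (-(n : ℝ) / 2) * t ^ (-(n : ℝ) / 2) :=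
    Real.mul_rpow (by positivity) ht'.le
  have e2 : (t⁻¹) ^ ((n : ℝ) / 2) = t ^ (-(n : ℝ) / 2) := by
    rw [Real.inv_rpow ht'.le, ← Real.rpow_neg ht'.le, neg_div]
  have e3 : Real.exp (-(1 / 32) * t⁻¹) = Real.exp (-1 / (32 * t)) := by
    congr 1; field_simp
  show (4 * Real.pi) ^ (-(n : ℝ) / 2) * K *
      ((t⁻¹) ^ ((n : ℝ) / 2) * Real.exp (-(1 / 32) * t⁻¹)) = _
  rw [e2, e3, e1]; ring

theorem stmt18 {n : ℕ} (μ : Measure (EuclideanSpace ℝ (Fin n))) [IsLocallyFiniteMeasure μ]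
    (t₀ : ℝ) (ht₀ : 0 < t₀)
    (hfin : ∫⁻ ξ, ENNReal.ofReal (W n (0 - ξ) t₀) ∂μ < ⊤) :
    (∀ α : ℝ, 0 < α →
      Tendsto (fun p : EuclideanSpace ℝ (Fin n) × ℝ =>
          heatExt μ p.1 p.2 - heatExt (μ.restrict (Metric.ball 0 1)) p.1 p.2)
        (nhdsWithin (0, 0) {p | ‖p.1‖ ^ 2 < α * p.2}) (nhds 0)) ∧
    ∀ L : ℝ,
      (∀ α : ℝ, 0 < α →
        Tendsto (fun p : EuclideanSpace ℝ (Fin n) × ℝ => heatExt μ p.1 p.2)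
          (nhdsWithin (0, 0) {p | ‖p.1‖ ^ 2 < α * p.2}) (nhds L)) ↔
      (∀ α : ℝ, 0 < α →
        Tendsto (fun p : EuclideanSpace ℝ (Fin n) × ℝ =>
            heatExt (μ.restrict (Metric.ball 0 1)) p.1 p.2)
          (nhdsWithin (0, 0) {p | ‖p.1‖ ^ 2 < α * p.2}) (nhds L)) := by
  have hπ := Real.pi_pos
  set E := EuclideanSpace ℝ (Fin n)
  set I₀ : ENNReal := ∫⁻ ξ, ENNReal.ofReal (W n (0 - ξ) t₀) ∂μ with hI₀def
  set c : ℝ → ℝ := fun t => (4 * Real.pi * t) ^ (-(n : ℝ) / 2) * Real.exp (-1 / (32 * t)) *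
    (4 * Real.pi * t₀) ^ ((n : ℝ) / 2) with hc_def
  have hcnn : ∀ t : ℝ, 0 < t → 0 ≤ c t := by
    intro t ht
    exact mul_nonneg (mul_nonneg (Real.rpow_nonneg (by positivity) _) (Real.exp_nonneg _))
      (Real.rpow_nonneg (by positivity) _)
  have hball : μ (Metric.ball (0 : E) 1) < ⊤ :=
    lt_of_le_of_lt (measure_mono Metric.ball_subset_closedBall)
      (isCompact_closedBall (0 : E) 1).measure_lt_top
  have main : ∀ α : ℝ, 0 < α →
      Tendsto (fun p : E × ℝ =>
          heatExt μ p.1 p.2 - heatExt (μ.restrict (Metric.ball 0 1)) p.1 p.2)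
        (nhdsWithin (0, 0) {p | ‖p.1‖ ^ 2 < α * p.2}) (nhds 0) := by
    intro α hα
    set F := nhdsWithin ((0 : E), (0 : ℝ)) {p : E × ℝ | ‖p.1‖ ^ 2 < α * p.2} with hF_def
    have hpos : ∀ᶠ p in F, 0 < p.2 := by
      filter_upwards [self_mem_nhdsWithin] with p hp
      have h0 : (0 : ℝ) ≤ ‖p.1‖ ^ 2 := by positivity
      have hp' : ‖p.1‖ ^ 2 < α * p.2 := hp
      nlinarith
    have hx12 : ∀ᶠ p in F, ‖p.1‖ < 1 / 2 := by
      have hc1 : Tendsto (fun p : E × ℝ => ‖p.1‖) (nhds ((0 : E), (0 : ℝ))) (nhds 0) := by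
        have := (continuous_norm.comp (continuous_fst : Continuous fun p : E × ℝ => p.1)).tendsto ((0 : E), (0 : ℝ))
        simpa [Function.comp_def] using this
      exact (hc1.mono_left nhdsWithin_le_nhds).eventually_lt_const (by norm_num)
    have ht8 : ∀ᶠ p in F, p.2 < t₀ / 8 := by
      have hc2 : Tendsto (fun p : E × ℝ => p.2) F (nhds 0) :=
        (continuous_snd.tendsto _).mono_left nhdsWithin_le_nhds
      exact hc2.eventually_lt_const (by linarith)
    have key : ∀ᶠ p in F,
        heatExt μ p.1 p.2 - heatExt (μ.restrict (Metric.ball 0 1)) p.1 p.2 =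
          (∫⁻ ξ in (Metric.ball (0 : E) 1)ᶜ, ENNReal.ofReal (W n (p.1 - ξ) p.2) ∂μ).toReal ∧
        (∫⁻ ξ in (Metric.ball (0 : E) 1)ᶜ, ENNReal.ofReal (W n (p.1 - ξ) p.2) ∂μ).toReal ≤
          c p.2 * I₀.toReal := by
      filter_upwards [hpos, hx12, ht8] with p hp hx ht8'
      obtain ⟨x, t⟩ := p
      simp only at hp hx ht8' ⊢
      have htail : ∫⁻ ξ in (Metric.ball (0 : E) 1)ᶜ, ENNReal.ofReal (W n (x - ξ) t) ∂μ ≤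
          ENNReal.ofReal (c t) * I₀ := by
        calc ∫⁻ ξ in (Metric.ball (0 : E) 1)ᶜ, ENNReal.ofReal (W n (x - ξ) t) ∂μ
            ≤ ∫⁻ ξ in (Metric.ball (0 : E) 1)ᶜ,
                ENNReal.ofReal (c t) * ENNReal.ofReal (W n (0 - ξ) t₀) ∂μ := by
              refine setLIntegral_mono' measurableSet_ball.compl fun ξ hξ => ?_
              have hξ1 : 1 ≤ ‖ξ‖ := by
                simp only [Set.mem_compl_iff, Metric.mem_ball, dist_zero_right, not_lt] at hξ
                exact hξ
              rw [← ENNReal.ofReal_mul (hcnn t hp)]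
              exact ENNReal.ofReal_le_ofReal (aux_key n ht₀ hp ht8'.le hx.le hξ1)
          _ ≤ ∫⁻ ξ, ENNReal.ofReal (c t) * ENNReal.ofReal (W n (0 - ξ) t₀) ∂μ :=
              setLIntegral_le_lintegral _ _
          _ = ENNReal.ofReal (c t) * I₀ := lintegral_const_mul' _ _ ENNReal.ofReal_ne_top
      have htailfin :
          ∫⁻ ξ in (Metric.ball (0 : E) 1)ᶜ, ENNReal.ofReal (W n (x - ξ) t) ∂μ < ⊤ :=
        lt_of_le_of_lt htail (ENNReal.mul_lt_top ENNReal.ofReal_lt_top hfin)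
      have hWle : ∀ ξ : E, W n (x - ξ) t ≤ (4 * Real.pi * t) ^ (-(n : ℝ) / 2) := by
        intro ξ
        have h1 : Real.exp (-‖x - ξ‖ ^ 2 / (4 * t)) ≤ 1 := by
          apply Real.exp_le_one_iff.mpr
          have : (0 : ℝ) ≤ ‖x - ξ‖ ^ 2 / (4 * t) := by positivity
          linarith [neg_div (4 * t) (‖x - ξ‖ ^ 2)]
        exact mul_le_of_le_one_right (Real.rpow_nonneg (by positivity) _) h1
      have hballint :
          ∫⁻ ξ in Metric.ball (0 : E) 1, ENNReal.ofReal (W n (x - ξ) t) ∂μ < ⊤ := by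
        calc ∫⁻ ξ in Metric.ball (0 : E) 1, ENNReal.ofReal (W n (x - ξ) t) ∂μ
            ≤ ∫⁻ _ in Metric.ball (0 : E) 1,
                ENNReal.ofReal ((4 * Real.pi * t) ^ (-(n : ℝ) / 2)) ∂μ :=
              setLIntegral_mono' measurableSet_ball fun ξ _ =>
                ENNReal.ofReal_le_ofReal (hWle ξ)
          _ = ENNReal.ofReal ((4 * Real.pi * t) ^ (-(n : ℝ) / 2)) * μ (Metric.ball (0 : E) 1) :=
              setLIntegral_const _ _
          _ < ⊤ := ENNReal.mul_lt_top ENNReal.ofReal_lt_top hball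
      have hdecomp : ∫⁻ ξ, ENNReal.ofReal (W n (x - ξ) t) ∂μ =
          (∫⁻ ξ in Metric.ball (0 : E) 1, ENNReal.ofReal (W n (x - ξ) t) ∂μ) +
            ∫⁻ ξ in (Metric.ball (0 : E) 1)ᶜ, ENNReal.ofReal (W n (x - ξ) t) ∂μ :=
        (lintegral_add_compl _ measurableSet_ball).symm
      constructor
      · show heatExt μ x t - heatExt (μ.restrict (Metric.ball 0 1)) x t = _
        unfold heatExt
        rw [hdecomp, ENNReal.toReal_add hballint.ne htailfin.ne]
        ring
      · have hmono := ENNReal.toReal_mono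
          (ENNReal.mul_ne_top ENNReal.ofReal_ne_top hfin.ne) htail
        rwa [ENNReal.toReal_mul, ENNReal.toReal_ofReal (hcnn t hp)] at hmono
    have hg : Tendsto (fun p : E × ℝ => c p.2 * I₀.toReal) F (nhds 0) := by
      have hsnd : Tendsto (fun p : E × ℝ => p.2) F (nhdsWithin 0 (Set.Ioi 0)) := by
        rw [tendsto_nhdsWithin_iff]
        exact ⟨(continuous_snd.tendsto _).mono_left nhdsWithin_le_nhds, hpos⟩
      have h1 := (aux_c_tendsto n ((4 * Real.pi * t₀) ^ ((n : ℝ) / 2))).comp hsnd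
      have h2 := h1.mul_const I₀.toReal
      rw [zero_mul] at h2
      exact h2
    refine squeeze_zero' ?_ ?_ hg
    · filter_upwards [key] with p hp
      rw [hp.1]; exact ENNReal.toReal_nonneg
    · filter_upwards [key] with p hp
      rw [hp.1]; exact hp.2
  refine ⟨main, fun L => ⟨fun hμ α hα => ?_, fun hν α hα => ?_⟩⟩
  · have h := (hμ α hα).sub (main α hα)
    rw [sub_zero] at h
    exact h.congr fun p => by ring
  · have h := (hν α hα).add (main α hα)
    rw [add_zero] at h
    exact h.congr fun p => by ring
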